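/- Let f : ℤ → [0,∞) be summable and log-concave, with support equal to {0, 1, …, k−1} for some k ≥ 1 (or to {0, 1, 2, …} when the support is infinite), and suppose f is nonincreasing on its support. Then there exists a unique q ∈ [0,1) such that the function g : ℤ → [0,∞) defined by g(j) = f(0)·q^j for j ≥ 0 and g(j) = 0 for j < 0 satisfies ∑_j g(j) = ∑_j f(j); moreover f majorizes g. -/

import Mathlib

open Real

section helpers

/-- Sum of an antitone nonneg function over any finset of naturals is at most
the sum over the initial segment of the same size. -/
lemma mySum_finset_le_range (G : ℕ → ℝ) (hnn : ∀ n, 0 ≤ G n)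
    (hmono : ∀ m n : ℕ, m ≤ n → G n ≤ G m) (T : Finset ℕ) :
    ∑ n ∈ T, G n ≤ ∑ n ∈ Finset.range T.card, G n := by
  induction T using Finset.strongInduction with
  | _ T ih =>
    rcases T.eq_empty_or_nonempty with rfl | hT
    · simp
    · set M := T.max' hT with hM
      have hMT : M ∈ T := T.max'_mem hT
      have hcpos : 1 ≤ T.card := Finset.card_pos.2 hT
      have hsub : T ⊆ Finset.range (M + 1) := by
        intro x hx
        exact Finset.mem_range.2 (Nat.lt_succ_of_le (T.le_max' x hx))
      have hcle : T.card ≤ M + 1 := by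
        simpa using Finset.card_le_card hsub
      have hMge : T.card - 1 ≤ M := by omega
      have herase : (T.erase M).card = T.card - 1 := Finset.card_erase_of_mem hMT
      have hih := ih (T.erase M) (Finset.erase_ssubset hMT)
      rw [herase] at hih
      have h1 : ∑ n ∈ T, G n = G M + ∑ n ∈ T.erase M, G n :=
        (Finset.add_sum_erase T G hMT).symm
      have h2 : ∑ n ∈ Finset.range T.card, G n
          = ∑ n ∈ Finset.range (T.card - 1), G n + G (T.card - 1) := by
        conv_lhs => rw [show T.card = (T.card - 1) + 1 by omega]
        rw [Finset.sum_range_succ]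
      rw [h1, h2]
      have := hmono _ _ hMge
      linarith

/-- ratio monotonicity from log-concavity -/
lemma myRatio (F : ℕ → ℝ) (hFnn : ∀ n, 0 ≤ F n)
    (hlc : ∀ n, F n * F (n + 2) ≤ F (n + 1) ^ 2)
    (hpos : ∀ n, 0 < F (n + 1) → 0 < F n) :
    ∀ n m : ℕ, n ≤ m → F (m + 1) * F n ≤ F (n + 1) * F m := by
  intro n m hnm
  induction m, hnm using Nat.le_induction with
  | base => exact le_rfl
  | succ m hnm ih =>
    rcases (hFnn (m + 1)).eq_or_lt with h0 | h0
    · have : F (m + 2) = 0 := by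
        by_contra h
        have : 0 < F (m + 2) := lt_of_le_of_ne (hFnn _) (Ne.symm h)
        exact absurd (hpos (m + 1) this) (by rw [← h0]; exact lt_irrefl 0)
      rw [this]
      simpa using mul_nonneg (hFnn (n + 1)) (hFnn (m + 1))
    · have h2 := hlc m
      nlinarith [hFnn (m + 2), hFnn (n + 1), hFnn n, hFnn m]

/-- if F dips below the geometric, the ratio has dropped below q -/
lemma myStep (F : ℕ → ℝ) (q : ℝ) (hFnn : ∀ n, 0 ≤ F n) (hq : 0 < q)
    (hlc : ∀ n, F n * F (n + 2) ≤ F (n + 1) ^ 2)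
    (hpos : ∀ n, 0 < F (n + 1) → 0 < F n)
    (n : ℕ) (hn : F n < F 0 * q ^ n) : F (n + 1) ≤ q * F n := by
  by_contra h
  push_neg at h
  have hratio := myRatio F hFnn hlc hpos
  have hFn1 : 0 < F (n + 1) := lt_of_le_of_lt (mul_nonneg hq.le (hFnn n)) h
  have hFn : 0 < F n := hpos n hFn1
  have claim : ∀ j, j ≤ n → F 0 * q ^ j ≤ F j := by
    intro j
    induction j with
    | zero => simp
    | succ j ihj =>
      intro hj
      have hj' : j ≤ n := Nat.le_of_succ_le hj
      have h1 := hratio j n hj'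
      have h2 : q * F n * F j ≤ F (j + 1) * F n := by
        have := mul_le_mul_of_nonneg_right h.le (hFnn j)
        linarith
      have h3 : q * F j ≤ F (j + 1) := by
        have h4 : (q * F j) * F n ≤ F (j + 1) * F n := by ring_nf; ring_nf at h2; linarith
        exact le_of_mul_le_mul_right h4 hFn
      calc F 0 * q ^ (j + 1) = q * (F 0 * q ^ j) := by ring
        _ ≤ q * F j := mul_le_mul_of_nonneg_left (ihj hj') hq.le
        _ ≤ F (j + 1) := h3
  exact absurd (claim n le_rfl) (not_le.2 hn)

/-- once strictly below the geometric, stays below -/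
lemma myBelow (F : ℕ → ℝ) (q : ℝ) (hFnn : ∀ n, 0 ≤ F n) (hq : 0 < q)
    (hlc : ∀ n, F n * F (n + 2) ≤ F (n + 1) ^ 2)
    (hpos : ∀ n, 0 < F (n + 1) → 0 < F n)
    (n : ℕ) (hn : F n < F 0 * q ^ n) :
    ∀ m, n ≤ m → F m < F 0 * q ^ m := by
  intro m hm
  induction m, hm using Nat.le_induction with
  | base => exact hn
  | succ m hnm ih =>
    have h1 := myStep F q hFnn hq hlc hpos m ih
    calc F (m + 1) ≤ q * F m := h1
      _ < q * (F 0 * q ^ m) := by exact mul_lt_mul_of_pos_left ih hq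
      _ = F 0 * q ^ (m + 1) := by ring

/-- key partial-sum lemma over ℕ -/
lemma myKey (F : ℕ → ℝ) (q : ℝ) (hFnn : ∀ n, 0 ≤ F n)
    (hq0 : 0 ≤ q) (hq1 : q < 1)
    (hlc : ∀ n, F n * F (n + 2) ≤ F (n + 1) ^ 2)
    (hpos : ∀ n, 0 < F (n + 1) → 0 < F n)
    (hsumF : Summable F)
    (heq : ∑' n, F n = ∑' n, F 0 * q ^ n) :
    ∀ k, ∑ n ∈ Finset.range k, F 0 * q ^ n ≤ ∑ n ∈ Finset.range k, F n := by
  intro k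
  by_contra hk
  push_neg at hk
  obtain ⟨n, hnk, hn⟩ : ∃ n, n < k ∧ F n < F 0 * q ^ n := by
    by_contra hall
    push_neg at hall
    exact absurd (Finset.sum_le_sum fun i hi => hall i (Finset.mem_range.1 hi))
      (not_le.2 hk)
  have hq : 0 < q := by
    rcases hq0.eq_or_lt with rfl | hq
    · cases n with
      | zero => simp at hn
      | succ m =>
        rw [zero_pow (Nat.succ_ne_zero m), mul_zero] at hn
        exact absurd hn (not_lt.2 (hFnn _))
    · exact hq
  have hbelow := myBelow F q hFnn hq hlc hpos n hn
  set c : ℝ := ∑ i ∈ Finset.range k, F i - ∑ i ∈ Finset.range k, F 0 * q ^ i with hc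
  have hcneg : c < 0 := by simp only [hc]; linarith
  have hsumG : Summable (fun n : ℕ => F 0 * q ^ n) :=
    (summable_geometric_of_lt_one hq0 hq1).mul_left (F 0)
  have hbound : ∀ K, k ≤ K →
      ∑ i ∈ Finset.range K, F i - ∑ i ∈ Finset.range K, F 0 * q ^ i ≤ c := by
    intro K hK
    have hsplitF : ∑ i ∈ Finset.range K, F i
        = ∑ i ∈ Finset.range k, F i + ∑ i ∈ Finset.Ico k K, F i := by
      rw [Finset.range_eq_Ico, Finset.range_eq_Ico]
      exact (Finset.sum_Ico_consecutive _ (Nat.zero_le k) hK).symm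
    have hsplitG : ∑ i ∈ Finset.range K, F 0 * q ^ i
        = ∑ i ∈ Finset.range k, F 0 * q ^ i + ∑ i ∈ Finset.Ico k K, F 0 * q ^ i := by
      rw [Finset.range_eq_Ico, Finset.range_eq_Ico]
      exact (Finset.sum_Ico_consecutive _ (Nat.zero_le k) hK).symm
    have htail : ∑ i ∈ Finset.Ico k K, F i ≤ ∑ i ∈ Finset.Ico k K, F 0 * q ^ i := by
      refine Finset.sum_le_sum fun i hi => ?_
      have hki : k ≤ i := (Finset.mem_Ico.1 hi).1
      exact (hbelow i (le_trans (le_of_lt hnk) hki)).le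
    rw [hsplitF, hsplitG, hc]
    linarith
  have htend : Filter.Tendsto
      (fun K => ∑ i ∈ Finset.range K, F i - ∑ i ∈ Finset.range K, F 0 * q ^ i)
      Filter.atTop (nhds ((∑' n, F n) - ∑' n, F 0 * q ^ n)) :=
    (hsumF.hasSum.tendsto_sum_nat).sub (hsumG.hasSum.tendsto_sum_nat)
  have hle : (∑' n, F n) - (∑' n, F 0 * q ^ n) ≤ c :=
    le_of_tendsto htend (Filter.eventually_atTop.2 ⟨k, hbound⟩)
  rw [heq] at hle
  simp at hle
  linarith

end helpers


/-- The largest possible sum of `f` over `k` integers: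
`sup { ∑_{i∈S} f(i) : S ⊆ ℤ finite, |S| = k }`. -/
noncomputable def maxSum (f : ℤ → ℝ) (k : ℕ) : ℝ :=
  ⨆ S : {S : Finset ℤ // S.card = k}, ∑ i ∈ S.1, f i

/-- `f` majorizes `g`: for each `k`, the sum of the `k` largest values of `f`
is at least that of `g`, and the total sums agree. -/
def Majorizes (f g : ℤ → ℝ) : Prop :=
  (∀ k : ℕ, maxSum g k ≤ maxSum f k) ∧ ∑' n, f n = ∑' n, g n

/-- `f` is log-concave: `f(n)² ≥ f(n−1)·f(n+1)` and contiguous support. -/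
def IsLogConcaveFun (f : ℤ → ℝ) : Prop :=
  (∀ n : ℤ, f (n - 1) * f (n + 1) ≤ f n ^ 2) ∧
  (∀ a b c : ℤ, a ≤ b → b ≤ c → 0 < f a → 0 < f c → 0 < f b)

/-- If `f : ℤ → [0,∞)` is summable, log-concave, supported on `{0,…,k−1}` (some `k ≥ 1`)
or on `{0,1,2,…}`, and nonincreasing on its support, then there is a unique `q ∈ [0,1)`
such that the geometric function `g(j) = f(0)·q^j` (for `j ≥ 0`, `g = 0` for `j < 0`)
has the same total sum as `f`; moreover `f` majorizes this `g`. -/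
theorem exists_unique_geometric_majorized (f : ℤ → ℝ)
    (hnn : ∀ n, 0 ≤ f n) (hsum : Summable f) (hlc : IsLogConcaveFun f)
    (hsupp : (∃ k : ℤ, 1 ≤ k ∧ Function.support f = Set.Ico 0 k) ∨
      Function.support f = Set.Ici 0)
    (hmono : ∀ m n : ℤ, 0 ≤ m → m ≤ n → f n ≤ f m) :
    (∃! q : ℝ, q ∈ Set.Ico (0 : ℝ) 1 ∧
      (∑' j : ℤ, if 0 ≤ j then f 0 * q ^ j.toNat else 0) = ∑' n, f n) ∧
    (∀ q ∈ Set.Ico (0 : ℝ) 1,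
      (∑' j : ℤ, if 0 ≤ j then f 0 * q ^ j.toNat else 0) = ∑' n, f n →
      Majorizes f (fun j : ℤ => if 0 ≤ j then f 0 * q ^ j.toNat else 0)) := by
  -- basic facts
  have hf0 : 0 < f 0 := by
    rcases hsupp with ⟨k, hk, hs⟩ | hs
    · have h0 : (0 : ℤ) ∈ Function.support f := by
        rw [hs]; exact ⟨le_refl 0, by linarith⟩
      exact lt_of_le_of_ne (hnn 0) (Ne.symm h0)
    · have h0 : (0 : ℤ) ∈ Function.support f := by
        rw [hs]; exact Set.mem_Ici.2 (le_refl 0)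
      exact lt_of_le_of_ne (hnn 0) (Ne.symm h0)
  have hsupp' : ∀ j : ℤ, f j ≠ 0 → 0 ≤ j := by
    intro j hj
    have hmem : j ∈ Function.support f := hj
    rcases hsupp with ⟨k, hk, hs⟩ | hs
    · rw [hs] at hmem; exact hmem.1
    · rw [hs] at hmem; exact hmem
  have hinjc : Function.Injective ((↑) : ℕ → ℤ) := fun a b h => Int.natCast_inj.mp h
  have hrangeF : Function.support f ⊆ Set.range ((↑) : ℕ → ℤ) := fun j hj =>
    ⟨j.toNat, Int.toNat_of_nonneg (hsupp' j hj)⟩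
  have htsumF : ∑' n : ℕ, f (n : ℤ) = ∑' j : ℤ, f j :=
    Function.Injective.tsum_eq hinjc hrangeF
  set S : ℝ := ∑' j : ℤ, f j with hSdef
  have hf0S : f 0 ≤ S := Summable.le_tsum hsum 0 fun j _ => hnn j
  have hS : 0 < S := lt_of_lt_of_le hf0 hf0S
  -- tsum of the geometric function over ℤ
  have htsumG : ∀ q : ℝ, q ∈ Set.Ico (0 : ℝ) 1 →
      (∑' j : ℤ, if 0 ≤ j then f 0 * q ^ j.toNat else 0) = f 0 * (1 - q)⁻¹ := by
    intro q hq
    have hgsupport : Function.support (fun j : ℤ => if 0 ≤ j then f 0 * q ^ j.toNat else 0)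
        ⊆ Set.range ((↑) : ℕ → ℤ) := by
      intro j hj
      by_cases h : 0 ≤ j
      · exact ⟨j.toNat, Int.toNat_of_nonneg h⟩
      · exact absurd (if_neg h) hj
    have h1 : ∑' n : ℕ, (if 0 ≤ ((n : ℤ)) then f 0 * q ^ ((n : ℤ)).toNat else 0)
        = ∑' j : ℤ, if 0 ≤ j then f 0 * q ^ j.toNat else 0 :=
      Function.Injective.tsum_eq hinjc hgsupport
    rw [← h1]
    have h2 : ∀ n : ℕ, (if 0 ≤ ((n : ℤ)) then f 0 * q ^ ((n : ℤ)).toNat else 0)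
        = f 0 * q ^ n := by
      intro n
      rw [if_pos (Int.natCast_nonneg n)]
      simp
    rw [tsum_congr h2, tsum_mul_left, tsum_geometric_of_lt_one hq.1 hq.2]
  -- the unique q
  have hmem₀ : (1 - f 0 / S) ∈ Set.Ico (0 : ℝ) 1 := by
    constructor
    · have : f 0 / S ≤ 1 := (div_le_one hS).2 hf0S
      linarith
    · have : 0 < f 0 / S := div_pos hf0 hS
      linarith
  have hsum₀ : (∑' j : ℤ, if 0 ≤ j then f 0 * (1 - f 0 / S) ^ j.toNat else 0) = S := by
    rw [htsumG _ hmem₀]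
    field_simp
    rw [sub_sub_cancel]; exact div_self hf0.ne'
  -- transported hypotheses for the key lemma
  have hlcN : ∀ n : ℕ, f (n : ℤ) * f ((n + 2 : ℕ) : ℤ) ≤ f ((n + 1 : ℕ) : ℤ) ^ 2 := by
    intro n
    have h := hlc.1 ((n : ℤ) + 1)
    have e1 : (n : ℤ) + 1 - 1 = (n : ℤ) := by ring
    have e2 : (n : ℤ) + 1 + 1 = ((n + 2 : ℕ) : ℤ) := by push_cast; ring
    have e3 : (n : ℤ) + 1 = ((n + 1 : ℕ) : ℤ) := by push_cast; ring
    rw [e1, e2, e3] at h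
    exact h
  have hposN : ∀ n : ℕ, 0 < f ((n + 1 : ℕ) : ℤ) → 0 < f (n : ℤ) := by
    intro n h
    exact hlc.2 0 (n : ℤ) ((n + 1 : ℕ) : ℤ) (Int.natCast_nonneg n)
      (by push_cast; linarith) hf0 h
  have hsumF : Summable (fun n : ℕ => f (n : ℤ)) :=
    hsum.comp_injective hinjc
  have hcast0 : f ((0 : ℕ) : ℤ) = f 0 := by norm_num
  constructor
  · -- existence and uniqueness
    refine ⟨1 - f 0 / S, ⟨hmem₀, hsum₀⟩, ?_⟩
    rintro q' ⟨hq'mem, hq'sum⟩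
    rw [htsumG _ hq'mem] at hq'sum
    have h1q : (0 : ℝ) < 1 - q' := by
      have := hq'mem.2; linarith
    have hE : f 0 = S * (1 - q') := by
      field_simp at hq'sum
      linarith
    field_simp
    linarith
  · -- majorization
    intro q hq heqZ
    constructor
    · -- maxSum inequality
      intro k
      haveI : Nonempty {T : Finset ℤ // T.card = k} :=
        ⟨⟨(Finset.range k).map ⟨((↑) : ℕ → ℤ), hinjc⟩, by simp⟩⟩
      have heqN : ∑' n : ℕ, f (n : ℤ) = ∑' n : ℕ, f ((0 : ℕ) : ℤ) * q ^ n := by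
        rw [hcast0, htsumF, ← heqZ]
        have hgsupport : Function.support (fun j : ℤ => if 0 ≤ j then f 0 * q ^ j.toNat else 0)
            ⊆ Set.range ((↑) : ℕ → ℤ) := by
          intro j hj
          by_cases h : 0 ≤ j
          · exact ⟨j.toNat, Int.toNat_of_nonneg h⟩
          · exact absurd (if_neg h) hj
        have h1 : ∑' n : ℕ, (if 0 ≤ ((n : ℤ)) then f 0 * q ^ ((n : ℤ)).toNat else 0)
            = ∑' j : ℤ, if 0 ≤ j then f 0 * q ^ j.toNat else 0 :=
          Function.Injective.tsum_eq hinjc hgsupport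
        rw [← h1]
        exact (tsum_congr fun n : ℕ => by rw [if_pos (Int.natCast_nonneg n)]; simp).symm
      have hkey := myKey (fun n : ℕ => f (n : ℤ)) q (fun n => hnn _) hq.1 hq.2
        (fun n => hlcN n) (fun n => hposN n) hsumF heqN k
      rw [hcast0] at hkey
      -- upper bound for maxSum g
      have hub : ∀ T : {T : Finset ℤ // T.card = k},
          (∑ i ∈ T.1, (fun j : ℤ => if 0 ≤ j then f 0 * q ^ j.toNat else 0) i)
            ≤ ∑ n ∈ Finset.range k, f 0 * q ^ n := by
        rintro ⟨T, hT⟩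
        simp only
        rw [← Finset.sum_filter (fun j : ℤ => 0 ≤ j) (fun j => f 0 * q ^ j.toNat)]
        set Tf := T.filter (fun j : ℤ => 0 ≤ j) with hTf
        have hinj : ∀ a ∈ Tf, ∀ b ∈ Tf, a.toNat = b.toNat → a = b := by
          intro a ha b hb hab
          have ha' : 0 ≤ a := (Finset.mem_filter.1 ha).2
          have hb' : 0 ≤ b := (Finset.mem_filter.1 hb).2
          rw [← Int.toNat_of_nonneg ha', ← Int.toNat_of_nonneg hb', hab]
        have himg : ∑ n ∈ Tf.image Int.toNat, f 0 * q ^ n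
            = ∑ i ∈ Tf, f 0 * q ^ i.toNat := Finset.sum_image hinj
        rw [← himg]
        have hG0 : ∀ n : ℕ, 0 ≤ f 0 * q ^ n := fun n =>
          mul_nonneg (hnn 0) (pow_nonneg hq.1 n)
        have hGmono : ∀ m n : ℕ, m ≤ n → f 0 * q ^ n ≤ f 0 * q ^ m := fun m n hmn =>
          mul_le_mul_of_nonneg_left (pow_le_pow_of_le_one hq.1 hq.2.le hmn) (hnn 0)
        refine le_trans (mySum_finset_le_range _ hG0 hGmono _) ?_
        refine Finset.sum_le_sum_of_subset_of_nonneg ?_ (fun i _ _ => hG0 i)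
        apply Finset.range_subset_range.2
        calc (Tf.image Int.toNat).card ≤ Tf.card := Finset.card_image_le
          _ ≤ T.card := Finset.card_filter_le _ _
          _ = k := hT
      have hup : maxSum (fun j : ℤ => if 0 ≤ j then f 0 * q ^ j.toNat else 0) k
          ≤ ∑ n ∈ Finset.range k, f 0 * q ^ n := ciSup_le hub
      -- lower bound for maxSum f
      have hbdd : BddAbove (Set.range fun T : {T : Finset ℤ // T.card = k} =>
          ∑ i ∈ T.1, f i) := by
        refine ⟨S, ?_⟩
        rintro x ⟨T, rfl⟩
        exact Summable.sum_le_tsum T.1 (fun i _ => hnn i) hsum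
      have hlow : ∑ n ∈ Finset.range k, f (n : ℤ) ≤ maxSum f k := by
        have h := le_ciSup hbdd
          (⟨(Finset.range k).map ⟨((↑) : ℕ → ℤ), hinjc⟩, by simp⟩ :
            {T : Finset ℤ // T.card = k})
        rw [Finset.sum_map] at h
        exact h
      calc maxSum (fun j : ℤ => if 0 ≤ j then f 0 * q ^ j.toNat else 0) k
          ≤ ∑ n ∈ Finset.range k, f 0 * q ^ n := hup
        _ ≤ ∑ n ∈ Finset.range k, f (n : ℤ) := hkey
        _ ≤ maxSum f k := hlow
    · exact heqZ.symm
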